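/- arXiv:1302.4207 — 3 statements merged into one kernel-verified Lean document; each statement's English description precedes it below -/
import Mathlib

section
/- (Base case of the composition theorem.) Fix n ∈ ℕ and finite sets X, Z. Let g ⊆ {0,1}^n × Z, and for 1 ≤ i ≤ n let f^i ⊆ X^{m_i} × {0,1} be non-trivial. Set h = g ∘ (f¹,...,fⁿ), and let ḡ be the relation obtained from g by substituting, for each i such that (f^i)⁻¹(b_i) = dom f^i for some b_i ∈ {0,1}, the constant b_i as the i'th input to g. If h is constant, then ḡ is constant. -/
/-- A decision tree over input alphabet `X` with `n` variables and output set `Y`: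
either a leaf labelled by an output, or an internal vertex labelled by a variable
index with one child for each element of `X`. -/
inductive DTree (X : Type) (n : ℕ) (Y : Type) : Type where
  | leaf : Y → DTree X n Y
  | node : Fin n → (X → DTree X n Y) → DTree X n Y

namespace DTree

/-- The function computed by a decision tree: query the variable labelling the
current vertex, follow the corresponding edge, and output the leaf label reached. -/
def eval {X Y : Type} {n : ℕ} : DTree X n Y → (Fin n → X) → Y
  | leaf y, _ => y
  | node i c, x => (c (x i)).eval x

/-- The weighted depth of a decision tree with weights `w`: the maximum, over all
root-to-leaf paths, of the sum of `w i` over the query labels `i` on that path. -/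
def wdepth {X Y : Type} {n : ℕ} [Fintype X] (w : Fin n → ℕ) : DTree X n Y → ℕ
  | leaf _ => 0
  | node i c => w i + Finset.univ.sup fun b => (c b).wdepth w

end DTree

/-- A decision tree `T` computes the relation `f ⊆ X^n × Y` if for every
`x ∈ dom f`, `(x, T.eval x) ∈ f`. -/
def Computes {X Y : Type} {n : ℕ} (T : DTree X n Y) (f : Set ((Fin n → X) × Y)) : Prop :=
  ∀ x : Fin n → X, (∃ y, (x, y) ∈ f) → (x, T.eval x) ∈ f

/-- The weighted decision tree complexity `D(f,[w₁,…,wₙ])`: the minimal weighted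
depth over all decision trees computing `f`. -/
noncomputable def wDT {X Y : Type} {n : ℕ} [Fintype X]
    (f : Set ((Fin n → X) × Y)) (w : Fin n → ℕ) : ℕ :=
  sInf {d | ∃ T : DTree X n Y, Computes T f ∧ T.wdepth w = d}

/-- The (unweighted) decision tree complexity `D(f) = D(f,[1,…,1])`. -/
noncomputable def DT {X Y : Type} {n : ℕ} [Fintype X] (f : Set ((Fin n → X) × Y)) : ℕ :=
  wDT f fun _ => 1

/-- A relation `f` is constant if there exists `y` with `f⁻¹(y) = dom f`. -/
def ConstantRel {X Y : Type} {n : ℕ} (f : Set ((Fin n → X) × Y)) : Prop :=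
  ∃ y : Y, ∀ x : Fin n → X, (x, y) ∈ f ↔ ∃ y', (x, y') ∈ f

/-- A relation `f` is trivial if for every `y`, `f⁻¹(y) = dom f`. -/
def TrivialRel {X Y : Type} {n : ℕ} (f : Set ((Fin n → X) × Y)) : Prop :=
  ∀ y : Y, ∀ x : Fin n → X, (x, y) ∈ f ↔ ∃ y', (x, y') ∈ f

/-- The restriction `f_{i←b} = {(x,y) ∈ f : x_i = b}`. -/
def restrictRel {X Y : Type} {n : ℕ} (f : Set ((Fin n → X) × Y)) (i : Fin n) (b : X) :
    Set ((Fin n → X) × Y) := {p ∈ f | p.1 i = b}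

/-- The index, inside a string split into `n` consecutive blocks of lengths
`m 0, …, m (n-1)`, of the `j`'th position of the `i`'th block. -/
def blockIdx {n : ℕ} {m : Fin n → ℕ} (i : Fin n) (j : Fin (m i)) : Fin (∑ k, m k) :=
  ⟨(∑ k ∈ Finset.univ.filter (fun k => k < i), m k) + j.val, by
    have hj := j.isLt
    have h1 : (∑ k ∈ Finset.univ.filter (fun k => k < i), m k) + j.val
        < ∑ k ∈ insert i (Finset.univ.filter (fun k => k < i)), m k := by
      rw [Finset.sum_insert (by simp)]
      omega
    exact h1.trans_le (Finset.sum_le_sum_of_subset fun x _ => Finset.mem_univ x)⟩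

/-- The `i`'th block (of length `m i`) of the input `x`. -/
def block {X : Type} {n : ℕ} {m : Fin n → ℕ} (x : Fin (∑ k, m k) → X) (i : Fin n) :
    Fin (m i) → X := fun j => x (blockIdx i j)

/-- The composition `g ∘ (f¹,…,fⁿ)` of an outer relation `g ⊆ Y^n × Z` with inner
relations `fⁱ ⊆ X^{mᵢ} × Y`:
`{(x,z) : ∃ y ∈ Y^n, (∀ i, (xⁱ, yᵢ) ∈ fⁱ) ∧ (y,z) ∈ g}`. -/
def Compose {X Y Z : Type} {n : ℕ} {m : Fin n → ℕ}
    (g : Set ((Fin n → Y) × Z)) (f : (i : Fin n) → Set ((Fin (m i) → X) × Y)) :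
    Set ((Fin (∑ k, m k) → X) × Z) :=
  {p | ∃ y : Fin n → Y, (∀ i, (block p.1 i, y i) ∈ f i) ∧ (y, p.2) ∈ g}

/-- The relation `ḡ` obtained from `g` by substituting, for each `i` such that the
inner relation `fⁱ` is constant with (unique) value `bᵢ`, the constant `bᵢ` as the
`i`'th input to `g`. -/
def substConst {X Y Z : Type} {n : ℕ} {m : Fin n → ℕ}
    (g : Set ((Fin n → Y) × Z)) (f : (i : Fin n) → Set ((Fin (m i) → X) × Y)) :
    Set ((Fin n → Y) × Z) :=
  {p ∈ g | ∀ i b, (∀ x, (x, b) ∈ f i ↔ ∃ y', (x, y') ∈ f i) → p.1 i = b}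


lemma offset_add_lt {n : ℕ} {m : Fin n → ℕ} {i i' : Fin n} (h : i < i') (j : Fin (m i)) :
    (∑ k ∈ Finset.univ.filter (fun k => k < i), m k) + j.val
      < ∑ k ∈ Finset.univ.filter (fun k => k < i'), m k := by
  have hsub : insert i (Finset.univ.filter (fun k => k < i))
      ⊆ Finset.univ.filter (fun k => k < i') := by
    intro k hk
    simp only [Finset.mem_insert, Finset.mem_filter, Finset.mem_univ, true_and] at *
    rcases hk with rfl | hk
    · exact h
    · exact hk.trans h
  have h2 : ∑ k ∈ insert i (Finset.univ.filter (fun k => k < i)), m k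
      ≤ ∑ k ∈ Finset.univ.filter (fun k => k < i'), m k :=
    Finset.sum_le_sum_of_subset hsub
  rw [Finset.sum_insert (by simp)] at h2
  have hj := j.isLt
  omega

lemma blockIdx_inj {n : ℕ} {m : Fin n → ℕ} {i i' : Fin n} {j : Fin (m i)} {j' : Fin (m i')}
    (h : blockIdx i j = blockIdx i' j') : (⟨i, j⟩ : Σ k, Fin (m k)) = ⟨i', j'⟩ := by
  have hval : (blockIdx i j).val = (blockIdx i' j').val := congrArg Fin.val h
  simp only [blockIdx] at hval
  rcases lt_trichotomy i i' with hlt | heq | hgt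
  · have := offset_add_lt hlt j
    omega
  · subst heq
    have : j = j' := Fin.ext (by omega)
    subst this
    rfl
  · have := offset_add_lt hgt j'
    omega

noncomputable def glue {X : Type} [Nonempty X] {n : ℕ} {m : Fin n → ℕ}
    (xs : ∀ i, Fin (m i) → X) : Fin (∑ k, m k) → X :=
  fun k =>
    if h : ∃ p : Σ i, Fin (m i), blockIdx p.1 p.2 = k then xs h.choose.1 h.choose.2
    else Classical.arbitrary X

lemma block_glue {X : Type} [Nonempty X] {n : ℕ} {m : Fin n → ℕ}
    (xs : ∀ i, Fin (m i) → X) (i : Fin n) : block (glue xs) i = xs i := by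
  funext j
  unfold block glue
  have hex : ∃ p : Σ i, Fin (m i), blockIdx p.1 p.2 = blockIdx i j := ⟨⟨i, j⟩, rfl⟩
  rw [dif_pos hex]
  have h2 : hex.choose = ⟨i, j⟩ := blockIdx_inj hex.choose_spec
  rw [h2]

/-- Base case of the composition theorem: if `h = g ∘ (f¹,…,fⁿ)` is
constant, with each `fⁱ` boolean-valued and non-trivial, then `ḡ` is constant. -/
theorem composition_base_case {X Z : Type} [Fintype X] [Nonempty X]
    [Fintype Z] [Nonempty Z] {n : ℕ} {m : Fin n → ℕ}
    (g : Set ((Fin n → Bool) × Z)) (f : (i : Fin n) → Set ((Fin (m i) → X) × Bool))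
    (hf : ∀ i, ¬ TrivialRel (f i))
    (hconst : ConstantRel (Compose g f)) :
    ConstantRel (substConst g f) := by
  obtain ⟨z₀, hz₀⟩ := hconst
  refine ⟨z₀, fun y => ⟨fun h => ⟨z₀, h⟩, ?_⟩⟩
  rintro ⟨z, hyg, hyc⟩
  have key : ∀ i, ∃ x : Fin (m i) → X, (x, y i) ∈ f i ∧ (x, !(y i)) ∉ f i := by
    intro i
    by_cases hc : ∀ x, (x, !(y i)) ∈ f i ↔ ∃ y', (x, y') ∈ f i
    · have := hyc i (!(y i)) hc
      simp at this
    · push_neg at hc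
      obtain ⟨x, hx⟩ := hc
      rcases hx with ⟨hmem, hall⟩ | ⟨hnot, y', hy'⟩
      · exact absurd hmem (hall _)
      have hy'eq : y' = y i := by
        by_contra hne
        have : y' = !(y i) := by
          cases hb : y i <;> cases hb' : y' <;> simp_all
        rw [this] at hy'
        exact hnot hy'
      exact ⟨x, hy'eq ▸ hy', hnot⟩
  choose xs hxs1 hxs2 using key
  have hxmem : (glue xs, z) ∈ Compose g f :=
    ⟨y, fun i => by rw [block_glue]; exact hxs1 i, hyg⟩
  have hx0 : (glue xs, z₀) ∈ Compose g f := (hz₀ (glue xs)).mpr ⟨z, hxmem⟩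
  obtain ⟨y', hy'f, hy'g⟩ := hx0
  have hyy : y' = y := by
    funext i
    have hfi := hy'f i
    rw [block_glue] at hfi
    by_contra hne
    have : y' i = !(y i) := by
      cases hb : y i <;> cases hb' : y' i <;> simp_all
    rw [this] at hfi
    exact hxs2 i hfi
  rw [hyy] at hy'g
  exact ⟨hy'g, hyc⟩
end

section
/- (Direct sum for boolean-valued relations.) Fix a finite set X and n, k ∈ ℕ. Let f¹,...,fⁿ ⊆ X^k × {0,1} be non-trivial relations, and define h ⊆ X^{kn} × {0,1}^n by h = (f¹,f²,...,fⁿ), i.e. h = {((x¹,...,xⁿ), y) : ∀i ∈ [n], (x^i, y_i) ∈ f^i}. Then D(h) = Σ_{i ∈ [n]} D(f^i). -/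
section Aux
open DTree

variable {X Y Z : Type} {n k N : ℕ}

/-- A tree that queries all variables (positions `< t`) and applies `F`. -/
def qAll (F : (Fin N → X) → Y) : ℕ → (Fin N → X) → DTree X N Y
  | 0, acc => .leaf (F acc)
  | t+1, acc =>
    if h : t < N then .node ⟨t, h⟩ (fun b => qAll F t (Function.update acc ⟨t, h⟩ b))
    else qAll F t acc

lemma qAll_eval (F : (Fin N → X) → Y) :
    ∀ (t : ℕ) (acc x : Fin N → X),
      (qAll F t acc).eval x = F (fun v => if v.val < t then x v else acc v)
  | 0, acc, x => by
    simp only [qAll, eval]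
    congr 1
  | t+1, acc, x => by
    by_cases h : t < N
    · simp only [qAll, dif_pos h, eval, qAll_eval F t]
      congr 1
      funext v
      rcases lt_trichotomy v.val t with hv | hv | hv
      · have h3 : v ≠ ⟨t, h⟩ := by
          intro he; rw [he] at hv; simp at hv
        simp [hv, Nat.lt_succ_of_lt hv, Function.update_of_ne h3]
      · have : v = ⟨t, h⟩ := Fin.ext hv
        subst this
        simp
      · have h1 : ¬ v.val < t := by omega
        have h2 : ¬ v.val < t + 1 := by omega
        have h3 : v ≠ ⟨t, h⟩ := by
          intro he; rw [he] at hv; simp at hv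
        simp [h1, h2, Function.update_of_ne h3]
    · simp only [qAll, dif_neg h, qAll_eval F t]
      congr 1
      funext v
      have hv := v.isLt
      have h1 : v.val < t := by omega
      have h2 : v.val < t + 1 := by omega
      simp [h1, h2]

lemma exists_optimal [Fintype X] [Nonempty X] [Nonempty Y] (f : Set ((Fin N → X) × Y)) :
    ∃ T : DTree X N Y, Computes T f ∧ T.wdepth (fun _ => 1) = DT f := by
  classical
  have hne : {d | ∃ T : DTree X N Y, Computes T f ∧ T.wdepth (fun _ => 1) = d}.Nonempty := by
    set F : (Fin N → X) → Y :=
      fun x => if h : ∃ y, (x, y) ∈ f then h.choose else Classical.arbitrary Y with hF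
    refine ⟨_, qAll F N (fun _ => Classical.arbitrary X), ?_, rfl⟩
    intro x hx
    have he : (qAll F N (fun _ => Classical.arbitrary X)).eval x = F x := by
      rw [qAll_eval]
      congr 1
      funext v
      simp [v.isLt]
    rw [he, hF]
    simp only
    rw [dif_pos hx]
    exact hx.choose_spec
  have := Nat.sInf_mem hne
  obtain ⟨T, h1, h2⟩ := this
  exact ⟨T, h1, h2⟩

lemma DT_le [Fintype X] {f : Set ((Fin N → X) × Y)} {T : DTree X N Y} (hT : Computes T f) :
    DT f ≤ T.wdepth (fun _ => 1) :=
  Nat.sInf_le ⟨T, hT, rfl⟩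

lemma DT_eq_zero_of_empty [Fintype X] [Nonempty Y] {f : Set ((Fin N → X) × Y)}
    (h : ¬ f.Nonempty) : DT f = 0 := by
  have : Computes (DTree.leaf (Classical.arbitrary Y) : DTree X N Y) f := by
    intro x ⟨y, hy⟩
    exact absurd ⟨(x, y), hy⟩ h
  simpa [DTree.wdepth] using DT_le this

lemma exists_restrict [Fintype X] [Nonempty X] [Nonempty Y] (f : Set ((Fin N → X) × Y))
    (j : Fin N) (hne : f.Nonempty) :
    ∃ b, (restrictRel f j b).Nonempty ∧ DT f ≤ 1 + DT (restrictRel f j b) := by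
  choose T hT hd using fun b => exists_optimal (restrictRel f j b)
  have hcomp : Computes (.node j T) f := by
    intro x hx
    have hmem : (x, (T (x j)).eval x) ∈ restrictRel f j (x j) := by
      apply hT (x j) x
      obtain ⟨y, hy⟩ := hx
      exact ⟨y, hy, rfl⟩
    exact hmem.1
  have hDT : DT f ≤ 1 + Finset.univ.sup fun b => DT (restrictRel f j b) := by
    have h1 := DT_le hcomp
    simpa [DTree.wdepth, hd] using h1
  obtain ⟨b0, -, hb0⟩ := Finset.exists_mem_eq_sup Finset.univ Finset.univ_nonempty
    (fun b => DT (restrictRel f j b))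
  by_cases hb : (restrictRel f j b0).Nonempty
  · exact ⟨b0, hb, by rw [hb0] at hDT; exact hDT⟩
  · obtain ⟨⟨x, y⟩, hxy⟩ := hne
    refine ⟨x j, ⟨(x, y), hxy, rfl⟩, ?_⟩
    have h0 : DT (restrictRel f j b0) = 0 := DT_eq_zero_of_empty hb
    rw [hb0, h0] at hDT
    omega

lemma blockIdx_val (i : Fin n) (j : Fin k) :
    (blockIdx (m := fun _ : Fin n => k) i j).val = i.val * k + j.val := by
  show (∑ _l ∈ Finset.univ.filter (fun l => l < i), k) + j.val = _
  rw [Finset.sum_const, smul_eq_mul]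
  congr 2
  rw [show Finset.univ.filter (fun l : Fin n => l < i) = Finset.Iio i by
    ext l; simp]
  exact Fin.card_Iio i

def asm (g : Fin n → Fin k → X) (v : Fin (∑ _ : Fin n, k)) : X :=
  have hv : v.val < n * k := by
    have := v.isLt
    simpa [Finset.sum_const, mul_comm] using this
  have hk : 0 < k := by
    rcases Nat.eq_zero_or_pos k with h | h
    · subst h; omega
    · exact h
  g ⟨v.val / k, (Nat.div_lt_iff_lt_mul hk).mpr hv⟩ ⟨v.val % k, Nat.mod_lt _ hk⟩

lemma block_asm (g : Fin n → Fin k → X) (i : Fin n) :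
    block (m := fun _ : Fin n => k) (asm g) i = g i := by
  funext j
  have hk : 0 < k := j.pos
  show asm g (blockIdx i j) = g i j
  unfold asm
  have hval : (blockIdx (m := fun _ : Fin n => k) i j).val = i.val * k + j.val :=
    blockIdx_val i j
  have h1 : (blockIdx (m := fun _ : Fin n => k) i j).val / k = i.val := by
    rw [hval, add_comm, Nat.add_mul_div_right _ _ hk, Nat.div_eq_of_lt j.isLt]
    omega
  have h2 : (blockIdx (m := fun _ : Fin n => k) i j).val % k = j.val := by
    rw [hval, add_comm, Nat.add_mul_mod_self_right, Nat.mod_eq_of_lt j.isLt]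
  have key : ∀ (a : Fin n) (b : Fin k), a.val = i.val → b.val = j.val → g a b = g i j := by
    intro a b ha hb
    rw [Fin.ext ha, Fin.ext hb]
  exact key _ _ h1 h2
end Aux

section Aux2
open DTree

variable {X Y Z : Type} {n k N : ℕ}

/-- Embed a tree over `Fin k` variables into one over `Fin N` variables via a
relabelling `ι`, continuing at each leaf with the continuation `κ`. -/
def embed (ι : Fin k → Fin N) (κ : Y → DTree X N Z) : DTree X k Y → DTree X N Z
  | .leaf y => κ y
  | .node j c => .node (ι j) (fun b => embed ι κ (c b))

lemma embed_eval (ι : Fin k → Fin N) (κ : Y → DTree X N Z) (T : DTree X k Y)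
    (x : Fin N → X) :
    (embed ι κ T).eval x = (κ (T.eval (fun j => x (ι j)))).eval x := by
  induction T with
  | leaf y => rfl
  | node j c ih => simp only [embed, eval, ih]

lemma embed_wdepth [Fintype X] (ι : Fin k → Fin N) (κ : Y → DTree X N Z)
    (T : DTree X k Y) {s : ℕ} (hκ : ∀ y, (κ y).wdepth (fun _ => 1) ≤ s) :
    (embed ι κ T).wdepth (fun _ => 1) ≤ T.wdepth (fun _ => 1) + s := by
  induction T with
  | leaf y => simpa [embed, wdepth] using hκ y
  | node j c ih =>
    simp only [embed, wdepth]
    have h1 : (Finset.univ.sup fun b => (embed ι κ (c b)).wdepth (fun _ => 1))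
        ≤ (Finset.univ.sup fun b => (c b).wdepth (fun _ => 1)) + s :=
      Finset.sup_le fun b _ =>
        (ih b).trans (Nat.add_le_add_right
          (Finset.le_sup (f := fun b => (c b).wdepth (fun _ => 1)) (Finset.mem_univ b)) s)
    omega

/-- Run the trees `Ts l` on the blocks `l < t` of the input, one after another. -/
def chain (Ts : Fin n → DTree X k Bool) :
    ℕ → (Fin n → Bool) → DTree X (∑ _ : Fin n, k) (Fin n → Bool)
  | 0, acc => .leaf acc
  | t+1, acc =>
    if h : t < n then
      embed (blockIdx (m := fun _ : Fin n => k) ⟨t, h⟩)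
        (fun y => chain Ts t (Function.update acc ⟨t, h⟩ y)) (Ts ⟨t, h⟩)
    else chain Ts t acc

lemma chain_eval (Ts : Fin n → DTree X k Bool) :
    ∀ (t : ℕ) (acc : Fin n → Bool) (x : Fin (∑ _ : Fin n, k) → X) (l : Fin n),
      (chain Ts t acc).eval x l
        = if l.val < t then (Ts l).eval (block x l) else acc l
  | 0, acc, x, l => by simp [chain, eval]
  | t+1, acc, x, l => by
    by_cases h : t < n
    · rw [chain, dif_pos h, embed_eval, chain_eval Ts t]
      rcases lt_trichotomy l.val t with hv | hv | hv
      · have h3 : l ≠ ⟨t, h⟩ := by intro he; rw [he] at hv; simp at hv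
        simp [hv, Nat.lt_succ_of_lt hv, Function.update_of_ne h3]
      · have hlt : l = ⟨t, h⟩ := Fin.ext hv
        subst hlt
        rw [if_neg (by simp), if_pos (by simp), Function.update_self]
        rfl
      · have h1 : ¬ l.val < t := by omega
        have h2 : ¬ l.val < t + 1 := by omega
        have h3 : l ≠ ⟨t, h⟩ := fun he => by
          rw [he] at hv; exact absurd hv (by simp)
        simp [h1, h2, Function.update_of_ne h3]
    · rw [chain, dif_neg h, chain_eval Ts t]
      have hl := l.isLt
      have h1 : l.val < t := by omega
      have h2 : l.val < t + 1 := by omega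
      simp [h1, h2]

lemma chain_wdepth [Fintype X] (Ts : Fin n → DTree X k Bool) :
    ∀ (t : ℕ) (acc : Fin n → Bool),
      (chain Ts t acc).wdepth (fun _ => 1)
        ≤ ∑ l ∈ Finset.univ.filter (fun l : Fin n => l.val < t), (Ts l).wdepth (fun _ => 1)
  | 0, acc => by simp [chain, wdepth]
  | t+1, acc => by
    by_cases h : t < n
    · rw [chain, dif_pos h]
      have hstep := embed_wdepth (blockIdx (m := fun _ : Fin n => k) ⟨t, h⟩)
        (fun y => chain Ts t (Function.update acc ⟨t, h⟩ y)) (Ts ⟨t, h⟩)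
        (s := ∑ l ∈ Finset.univ.filter (fun l : Fin n => l.val < t), (Ts l).wdepth (fun _ => 1))
        (fun y => chain_wdepth Ts t _)
      have hins : Finset.univ.filter (fun l : Fin n => l.val < t + 1)
          = insert ⟨t, h⟩ (Finset.univ.filter (fun l : Fin n => l.val < t)) := by
        ext l
        simp only [Finset.mem_filter, Finset.mem_univ, true_and, Finset.mem_insert]
        constructor
        · intro hl
          rcases Nat.lt_or_ge l.val t with h1 | h1
          · exact Or.inr h1
          · exact Or.inl (Fin.ext (show l.val = t by omega))
        · rintro (rfl | hl)
          · simp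
          · omega
      have hnotmem : (⟨t, h⟩ : Fin n) ∉ Finset.univ.filter (fun l : Fin n => l.val < t) := by
        simp
      rw [hins, Finset.sum_insert hnotmem]
      exact hstep
    · rw [chain, dif_neg h]
      have heq : Finset.univ.filter (fun l : Fin n => l.val < t + 1)
          = Finset.univ.filter (fun l : Fin n => l.val < t) := by
        ext l
        have := l.isLt
        simp only [Finset.mem_filter, Finset.mem_univ, true_and]
        omega
      rw [heq]
      exact chain_wdepth Ts t acc

/-- The direct sum relation. -/
def DS (f : Fin n → Set ((Fin k → X) × Y)) :
    Set ((Fin (∑ _ : Fin n, k) → X) × (Fin n → Y)) :=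
  {p | ∀ i : Fin n, (block p.1 i, p.2 i) ∈ f i}

lemma DS_upper [Fintype X] [Nonempty X] (f : Fin n → Set ((Fin k → X) × Bool)) :
    DT (DS f) ≤ ∑ l, DT (f l) := by
  choose Ts hTs hd using fun l => exists_optimal (f l)
  have hcomp : Computes (chain Ts n (fun _ => false)) (DS f) := by
    rintro x ⟨y, hy⟩ l
    show (block x l, (chain Ts n (fun _ => false)).eval x l) ∈ f l
    rw [chain_eval, if_pos l.isLt]
    exact hTs l (block x l) ⟨y l, hy l⟩
  calc DT (DS f) ≤ (chain Ts n (fun _ => false)).wdepth (fun _ => 1) := DT_le hcomp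
    _ ≤ ∑ l ∈ Finset.univ.filter (fun l : Fin n => l.val < n), (Ts l).wdepth (fun _ => 1) :=
        chain_wdepth Ts n _
    _ = ∑ l, DT (f l) := by
        rw [Finset.filter_true_of_mem (fun l _ => l.isLt)]
        exact Finset.sum_congr rfl fun l _ => hd l

end Aux2

section Aux3
open DTree

variable {X : Type} {n k : ℕ}

lemma DS_lower [Fintype X] [Nonempty X] (T : DTree X (∑ _ : Fin n, k) (Fin n → Bool)) :
    ∀ f : Fin n → Set ((Fin k → X) × Bool), (∀ l, (f l).Nonempty) → Computes T (DS f) →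
      ∑ l, DT (f l) ≤ T.wdepth (fun _ => 1) := by
  induction T with
  | leaf y =>
    intro f hdom hT
    have hzero : ∀ l : Fin n, DT (f l) = 0 := by
      intro l
      have hcomp : Computes (DTree.leaf (y l) : DTree X k Bool) (f l) := by
        rintro xl ⟨yl, hyl⟩
        set p : Fin n → (Fin k → X) × Bool :=
          Function.update (fun l' => (hdom l').choose) l (xl, yl) with hp
        have hpmem : ∀ l', p l' ∈ f l' := by
          intro l'
          rcases eq_or_ne l' l with rfl | h
          · simpa [hp] using hyl
          · simpa [hp, Function.update_of_ne h] using (hdom l').choose_spec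
        set x : Fin (∑ _ : Fin n, k) → X := asm (fun l' => (p l').1) with hx
        have hbl : ∀ l', block x l' = (p l').1 := fun l' => block_asm _ l'
        have hxdom : ∃ yy, (x, yy) ∈ DS f :=
          ⟨fun l' => (p l').2, fun l' => by rw [hbl l']; exact hpmem l'⟩
        have hmem := hT x hxdom l
        rw [hbl l] at hmem
        have hpl : p l = (xl, yl) := Function.update_self l _ _
        rw [hpl] at hmem
        exact hmem
      simpa [DTree.wdepth] using DT_le hcomp
    simp [hzero, DTree.wdepth]
  | node v c ih =>
    intro f hdom hT
    rcases Nat.eq_zero_or_pos k with hk0 | hk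
    · exfalso
      have h1 := v.isLt
      have h2 : (∑ _ : Fin n, k) = 0 := by simp [hk0]
      omega
    have hv : v.val < n * k := by
      have h1 := v.isLt
      have h2 : (∑ _ : Fin n, k) = n * k := by simp [Finset.sum_const, mul_comm]
      omega
    set i : Fin n := ⟨v.val / k, (Nat.div_lt_iff_lt_mul hk).mpr hv⟩ with hi
    set j : Fin k := ⟨v.val % k, Nat.mod_lt _ hk⟩ with hj
    have hij : blockIdx (m := fun _ : Fin n => k) i j = v := by
      apply Fin.ext
      rw [blockIdx_val]
      show v.val / k * k + v.val % k = v.val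
      exact Nat.div_add_mod' _ _
    obtain ⟨b, hbne, hble⟩ := exists_restrict (f i) j (hdom i)
    set f' := Function.update f i (restrictRel (f i) j b) with hf'
    have hdom' : ∀ l, (f' l).Nonempty := by
      intro l
      rcases eq_or_ne l i with rfl | h
      · simpa [hf'] using hbne
      · simpa [hf', Function.update_of_ne h] using hdom l
    have hcb : Computes (c b) (DS f') := by
      rintro x ⟨y', hy'⟩
      have hxi : (block x i, y' i) ∈ restrictRel (f i) j b := by
        have := hy' i
        simpa [hf'] using this
      have hxv : x v = b := by
        rw [← hij]
        exact hxi.2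
      have hxdom : ∃ yy, (x, yy) ∈ DS f := by
        refine ⟨y', fun l => ?_⟩
        rcases eq_or_ne l i with rfl | h
        · exact hxi.1
        · have := hy' l
          simpa [hf', Function.update_of_ne h] using this
      have hTx := hT x hxdom
      have heval : (DTree.node v c).eval x = (c b).eval x := by
        show (c (x v)).eval x = (c b).eval x
        rw [hxv]
      rw [heval] at hTx
      intro l
      rcases eq_or_ne l i with rfl | h
      · rw [show f' i = restrictRel (f i) j b from Function.update_self i _ f]
        refine ⟨hTx i, ?_⟩
        show x (blockIdx (m := fun _ : Fin n => k) i j) = b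
        rw [hij]
        exact hxv
      · simpa [hf', Function.update_of_ne h] using hTx l
    have hIH := ih b f' hdom' hcb
    have hsum' : ∑ l, DT (f' l)
        = DT (restrictRel (f i) j b) + ∑ l ∈ Finset.univ.erase i, DT (f l) := by
      rw [hf']
      rw [← Finset.add_sum_erase _ _ (Finset.mem_univ i)]
      congr 1
      · simp
      · exact Finset.sum_congr rfl fun l hl =>
          congrArg DT (Function.update_of_ne (Finset.mem_erase.mp hl).1 _ _)
    have hsum : ∑ l, DT (f l) = DT (f i) + ∑ l ∈ Finset.univ.erase i, DT (f l) :=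
      (Finset.add_sum_erase _ _ (Finset.mem_univ i)).symm
    have hle : (c b).wdepth (fun _ => 1)
        ≤ Finset.univ.sup fun b' => (c b').wdepth (fun _ => 1) :=
      Finset.le_sup (f := fun b' => (c b').wdepth (fun _ => 1)) (Finset.mem_univ b)
    show ∑ l, DT (f l) ≤ 1 + Finset.univ.sup fun b' => (c b').wdepth (fun _ => 1)
    omega

end Aux3

/-- Direct sum for boolean-valued relations: for non-trivial
`f¹,…,fⁿ ⊆ X^k × {0,1}` and `h = (f¹,…,fⁿ) ⊆ X^{kn} × {0,1}^n`,
`D(h) = Σᵢ D(fⁱ)`. -/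
theorem direct_sum {X : Type} [Fintype X] [Nonempty X] {n k : ℕ}
    (f : Fin n → Set ((Fin k → X) × Bool)) (hf : ∀ i, ¬ TrivialRel (f i)) :
    DT {p : (Fin (∑ _ : Fin n, k) → X) × (Fin n → Bool) |
        ∀ i : Fin n, (block p.1 i, p.2 i) ∈ f i} = ∑ i, DT (f i) := by
  have hdom : ∀ l, (f l).Nonempty := by
    intro l
    by_contra h
    apply hf l
    intro y x
    constructor
    · intro hxy
      exact absurd ⟨(x, y), hxy⟩ h
    · rintro ⟨y', hy'⟩
      exact absurd ⟨(x, y'), hy'⟩ h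
  show DT (DS f) = ∑ i, DT (f i)
  refine le_antisymm (DS_upper f) ?_
  obtain ⟨T, hT, hd⟩ := exists_optimal (DS f)
  rw [← hd]
  exact DS_lower T f hdom hT
end

section
/- (Failure of the composition theorem for non-boolean inner functions.) There exist total functions f : {0,1}² → {0,1,2} and g : {0,1,2}² → {0,1,2} such that D(f) = 2, D(g) = 2, but the composed total function h : {0,1}⁴ → {0,1,2} defined by h(x₁,x₂,x₃,x₄) = g(f(x₁,x₂), f(x₃,x₄)) satisfies D(h) = 3 < D(f)·D(g). (One such choice: f(x₁,x₂) = 0 if x₁ = 0, and f(x₁,x₂) = 1 + x₂ if x₁ = 1; g(y₁,y₂) = y₂ if y₁ = 0, and g(y₁,y₂) = y₁ if y₁ ∈ {1,2}.) -/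
/-- The decision tree complexity of a total function `F : X^n → Y`: the minimal
depth over all decision trees `T` computing `F` (i.e. with `T.eval = F`). -/
noncomputable def DTfun {X Y : Type} [Fintype X] {n : ℕ} (F : (Fin n → X) → Y) : ℕ :=
  sInf {d | ∃ T : DTree X n Y, (∀ x, T.eval x = F x) ∧ T.wdepth (fun _ => 1) = d}


section Aux

/-- Certificate lemma: the output of a tree on `x` is determined by the values of `x`
on a set of at most `wdepth` coordinates. -/
lemma exists_cert {X Y : Type} [Fintype X] {n : ℕ} (T : DTree X n Y) :
    ∀ x : Fin n → X, ∃ S : Finset (Fin n), S.card ≤ T.wdepth (fun _ => 1) ∧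
      ∀ x' : Fin n → X, (∀ i ∈ S, x' i = x i) → T.eval x' = T.eval x := by
  induction T with
  | leaf y => intro x; exact ⟨∅, by simp [DTree.wdepth], fun _ _ => rfl⟩
  | node i c ih =>
    intro x
    obtain ⟨S, hS, hval⟩ := ih (x i) x
    refine ⟨insert i S, ?_, ?_⟩
    · have h1 : (insert i S).card ≤ S.card + 1 := Finset.card_insert_le _ _
      have h2 : (c (x i)).wdepth (fun _ => 1)
          ≤ Finset.univ.sup (fun b => (c b).wdepth (fun _ => 1)) :=
        Finset.le_sup (f := fun b => (c b).wdepth (fun _ => 1)) (Finset.mem_univ (x i))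
      have h3 : (DTree.node i c).wdepth (fun _ => 1)
          = 1 + Finset.univ.sup fun b => (c b).wdepth (fun _ => 1) := rfl
      omega
    · intro x' hx'
      have hi : x' i = x i := hx' i (Finset.mem_insert_self i S)
      show (c (x' i)).eval x' = (c (x i)).eval x
      rw [hi]
      exact hval x' fun j hj => hx' j (Finset.mem_insert_of_mem hj)

lemma DTfun_le {X Y : Type} [Fintype X] {n : ℕ} {F : (Fin n → X) → Y}
    (T : DTree X n Y) (hT : ∀ x, T.eval x = F x) :
    DTfun F ≤ T.wdepth (fun _ => 1) :=
  Nat.sInf_le ⟨T, hT, rfl⟩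

lemma le_DTfun {X Y : Type} [Fintype X] {n : ℕ} {F : (Fin n → X) → Y} {d : ℕ}
    (hne : {d | ∃ T : DTree X n Y, (∀ x, T.eval x = F x) ∧
      T.wdepth (fun _ => 1) = d}.Nonempty)
    (H : ∀ T : DTree X n Y, (∀ x, T.eval x = F x) → d ≤ T.wdepth (fun _ => 1)) :
    d ≤ DTfun F := by
  obtain ⟨T, hT, hw⟩ := Nat.sInf_mem hne
  exact le_trans (H T hT) (le_of_eq hw)

/-- The inner function. -/
def myf : (Fin 2 → Bool) → Fin 3 := fun x =>
  if x 0 then (if x 1 then 2 else 1) else 0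

/-- The outer function. -/
def myg : (Fin 2 → Fin 3) → Fin 3 := fun y =>
  if y 0 = 0 then y 1 else y 0

/-- The composed function, exactly as it appears in the theorem statement. -/
def myh : (Fin 4 → Bool) → Fin 3 := fun x =>
  myg fun i => myf fun j =>
    x ⟨2 * i.val + j.val, by have := j.isLt; have := i.isLt; omega⟩

def Tf : DTree Bool 2 (Fin 3) :=
  .node 0 fun b => .node 1 fun b' => .leaf (if b then (if b' then 2 else 1) else 0)

def Tg : DTree (Fin 3) 2 (Fin 3) :=
  .node 0 fun b => .node 1 fun b' => .leaf (if b = 0 then b' else b)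

def Th : DTree Bool 4 (Fin 3) :=
  .node 0 fun b =>
    match b with
    | true => .node 1 fun b' => .leaf (if b' then 2 else 1)
    | false => .node 2 fun c => .node 3 fun d =>
        .leaf (if c then (if d then 2 else 1) else 0)

lemma Tf_eval : ∀ x, Tf.eval x = myf x := by decide
lemma Tg_eval : ∀ x, Tg.eval x = myg x := by decide
lemma Th_eval : ∀ x, Th.eval x = myh x := by decide

lemma Tf_depth : Tf.wdepth (fun _ => 1) = 2 := by decide
lemma Tg_depth : Tg.wdepth (fun _ => 1) = 2 := by decide
lemma Th_depth : Th.wdepth (fun _ => 1) = 3 := by decide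

lemma card_le_one_no_pair {n : ℕ} {S : Finset (Fin n)} (h : S.card ≤ 1)
    {a b : Fin n} (hab : a ≠ b) : a ∉ S ∨ b ∉ S := by
  by_contra hc
  push_neg at hc
  exact hab (Finset.card_le_one.mp h a hc.1 b hc.2)

lemma myf_lower : ∀ T : DTree Bool 2 (Fin 3), (∀ x, T.eval x = myf x) →
    2 ≤ T.wdepth (fun _ => 1) := by
  intro T hT
  by_contra hlt
  push_neg at hlt
  obtain ⟨S, hS, hval⟩ := exists_cert T ![true, false]
  have hS1 : S.card ≤ 1 := by omega
  rcases card_le_one_no_pair hS1 (show (0 : Fin 2) ≠ 1 by decide) with h0 | h1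
  · have hag : ∀ i ∈ S, (![false, false] : Fin 2 → Bool) i = ![true, false] i := by
      intro i hi
      have : i ≠ 0 := fun e => h0 (e ▸ hi)
      have : ∀ i : Fin 2, i ≠ 0 → (![false, false] : Fin 2 → Bool) i = ![true, false] i := by
        decide
      exact this i ‹_ ≠ _›
    have := hval _ hag
    rw [hT, hT] at this
    exact absurd this (by decide)
  · have hag : ∀ i ∈ S, (![true, true] : Fin 2 → Bool) i = ![true, false] i := by
      intro i hi
      have : i ≠ 1 := fun e => h1 (e ▸ hi)
      have : ∀ i : Fin 2, i ≠ 1 → (![true, true] : Fin 2 → Bool) i = ![true, false] i := by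
        decide
      exact this i ‹_ ≠ _›
    have := hval _ hag
    rw [hT, hT] at this
    exact absurd this (by decide)

lemma myg_lower : ∀ T : DTree (Fin 3) 2 (Fin 3), (∀ x, T.eval x = myg x) →
    2 ≤ T.wdepth (fun _ => 1) := by
  intro T hT
  by_contra hlt
  push_neg at hlt
  obtain ⟨S, hS, hval⟩ := exists_cert T ![0, 0]
  have hS1 : S.card ≤ 1 := by omega
  rcases card_le_one_no_pair hS1 (show (0 : Fin 2) ≠ 1 by decide) with h0 | h1
  · have hag : ∀ i ∈ S, (![1, 0] : Fin 2 → Fin 3) i = ![0, 0] i := by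
      intro i hi
      have hne : i ≠ 0 := fun e => h0 (e ▸ hi)
      have key : ∀ i : Fin 2, i ≠ 0 → (![1, 0] : Fin 2 → Fin 3) i = ![0, 0] i := by
        decide
      exact key i hne
    have := hval _ hag
    rw [hT, hT] at this
    exact absurd this (by decide)
  · have hag : ∀ i ∈ S, (![0, 1] : Fin 2 → Fin 3) i = ![0, 0] i := by
      intro i hi
      have hne : i ≠ 1 := fun e => h1 (e ▸ hi)
      have key : ∀ i : Fin 2, i ≠ 1 → (![0, 1] : Fin 2 → Fin 3) i = ![0, 0] i := by
        decide
      exact key i hne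
    have := hval _ hag
    rw [hT, hT] at this
    exact absurd this (by decide)

lemma myh_lower : ∀ T : DTree Bool 4 (Fin 3), (∀ x, T.eval x = myh x) →
    3 ≤ T.wdepth (fun _ => 1) := by
  intro T hT
  by_contra hlt
  push_neg at hlt
  -- base point x = (false, false, true, false); h x = 1
  obtain ⟨S, hS, hval⟩ := exists_cert T ![false, false, true, false]
  have hS2 : S.card ≤ 2 := by omega
  have hcases : (3 : Fin 4) ∉ S ∨ (2 : Fin 4) ∉ S ∨ ((0 : Fin 4) ∉ S ∧ (1 : Fin 4) ∉ S) := by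
    by_contra hc
    push_neg at hc
    obtain ⟨h3, h2, h01⟩ := hc
    by_cases hc0 : (0 : Fin 4) ∈ S
    · have hsub : ({3, 2, 0} : Finset (Fin 4)) ⊆ S := by
        intro t ht
        fin_cases ht <;> assumption
      have h4 := Finset.card_le_card hsub
      have hc3 : ({3, 2, 0} : Finset (Fin 4)).card = 3 := by decide
      omega
    · have h1 : (1 : Fin 4) ∈ S := h01 hc0
      have hsub : ({3, 2, 1} : Finset (Fin 4)) ⊆ S := by
        intro t ht
        fin_cases ht <;> assumption
      have h4 := Finset.card_le_card hsub
      have hc3 : ({3, 2, 1} : Finset (Fin 4)).card = 3 := by decide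
      omega
  rcases hcases with h3 | h2 | ⟨h0, h1⟩
  · -- flip coordinate 3 : h = 2 ≠ 1
    have hag : ∀ i ∈ S, (![false, false, true, true] : Fin 4 → Bool) i
        = ![false, false, true, false] i := by
      intro i hi
      have hne : i ≠ 3 := fun e => h3 (e ▸ hi)
      have key : ∀ i : Fin 4, i ≠ 3 → (![false, false, true, true] : Fin 4 → Bool) i
          = ![false, false, true, false] i := by decide
      exact key i hne
    have := hval _ hag
    rw [hT, hT] at this
    exact absurd this (by decide)
  · -- flip coordinate 2 : h = 0 ≠ 1
    have hag : ∀ i ∈ S, (![false, false, false, false] : Fin 4 → Bool) i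
        = ![false, false, true, false] i := by
      intro i hi
      have hne : i ≠ 2 := fun e => h2 (e ▸ hi)
      have key : ∀ i : Fin 4, i ≠ 2 → (![false, false, false, false] : Fin 4 → Bool) i
          = ![false, false, true, false] i := by decide
      exact key i hne
    have := hval _ hag
    rw [hT, hT] at this
    exact absurd this (by decide)
  · -- flip coordinates 0 and 1 : h = 2 ≠ 1
    have hag : ∀ i ∈ S, (![true, true, true, false] : Fin 4 → Bool) i
        = ![false, false, true, false] i := by
      intro i hi
      have hne0 : i ≠ 0 := fun e => h0 (e ▸ hi)
      have hne1 : i ≠ 1 := fun e => h1 (e ▸ hi)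
      have key : ∀ i : Fin 4, i ≠ 0 → i ≠ 1 → (![true, true, true, false] : Fin 4 → Bool) i
          = ![false, false, true, false] i := by decide
      exact key i hne0 hne1
    have := hval _ hag
    rw [hT, hT] at this
    exact absurd this (by decide)

lemma DTfun_myf : DTfun myf = 2 :=
  le_antisymm ((DTfun_le Tf Tf_eval).trans (le_of_eq Tf_depth)) (le_DTfun ⟨2, Tf, Tf_eval, Tf_depth⟩ myf_lower)

lemma DTfun_myg : DTfun myg = 2 :=
  le_antisymm ((DTfun_le Tg Tg_eval).trans (le_of_eq Tg_depth)) (le_DTfun ⟨2, Tg, Tg_eval, Tg_depth⟩ myg_lower)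

lemma DTfun_myh : DTfun myh = 3 :=
  le_antisymm ((DTfun_le Th Th_eval).trans (le_of_eq Th_depth)) (le_DTfun ⟨3, Th, Th_eval, Th_depth⟩ myh_lower)

end Aux

/-- Failure of the composition theorem for non-boolean inner
functions: there are total functions `f : {0,1}² → {0,1,2}` and
`g : {0,1,2}² → {0,1,2}` with `D(f) = D(g) = 2` but, for
`h(x₁,x₂,x₃,x₄) = g(f(x₁,x₂), f(x₃,x₄))`, `D(h) = 3 < D(f)·D(g)`. -/
theorem composition_counterexample :
    ∃ (f : (Fin 2 → Bool) → Fin 3) (g : (Fin 2 → Fin 3) → Fin 3),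
      DTfun f = 2 ∧ DTfun g = 2 ∧
      DTfun (fun x : Fin 4 → Bool =>
        g fun i => f fun j =>
          x ⟨2 * i.val + j.val, by have := i.isLt; have := j.isLt; omega⟩) = 3 ∧
      3 < DTfun f * DTfun g := by
  refine ⟨myf, myg, DTfun_myf, DTfun_myg, ?_, ?_⟩
  · exact DTfun_myh
  · rw [DTfun_myf, DTfun_myg]; norm_num
end
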